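/- arXiv:1903.04922 — 2 statements merged into one kernel-verified Lean document; each statement's English description precedes it below -/
import Mathlib

section
/- Let N ≥ 2, k, ℓ, α real with α ∈ (-1,0), ℓ+N+α > 0, k+N+α > 0, and suppose kN < ℓ(N-1) - α. Let Ω(t) be the unit ball in ℝ^N centered at (0,…,0,t). Then the isoperimetric ratio R(Ω(t)) := P(Ω(t)) / (V(Ω(t)))^{(k+N+α-1)/(ℓ+N+α)}, where P(Ω(t)) = ∫_{∂Ω(t)} |x|^k x_N^α dH^{N-1} and V(Ω(t)) = ∫_{Ω(t)} |x|^ℓ x_N^α dx, tends to 0 as t → +∞. -/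
open MeasureTheory Filter Topology Metric

private lemma stmt6_coord_le {N : ℕ} (x : EuclideanSpace ℝ (Fin N)) (i : Fin N) :
    |x i| ≤ ‖x‖ := by
  rw [EuclideanSpace.norm_eq]
  have h := Finset.single_le_sum (f := fun j => ‖x j‖ ^ 2)
    (fun j _ => by positivity) (Finset.mem_univ i)
  calc |x i| = Real.sqrt (‖x i‖ ^ 2) := by rw [Real.sqrt_sq_eq_abs]; simp
    _ ≤ _ := Real.sqrt_le_sqrt h

private lemma stmt6_rpow_bounds {t y : ℝ} (p : ℝ) (ht : 0 < t) (h1 : t / 2 ≤ y)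
    (h2 : y ≤ 2 * t) :
    min ((2:ℝ) ^ p) ((2:ℝ)⁻¹ ^ p) * t ^ p ≤ y ^ p ∧
      y ^ p ≤ max ((2:ℝ) ^ p) ((2:ℝ)⁻¹ ^ p) * t ^ p := by
  have ht2 : (0:ℝ) < t / 2 := by linarith
  have hy : 0 < y := lt_of_lt_of_le ht2 h1
  have e1 : (2 * t) ^ p = (2:ℝ) ^ p * t ^ p := Real.mul_rpow (by norm_num) ht.le
  have e2 : (t / 2) ^ p = (2:ℝ)⁻¹ ^ p * t ^ p := by
    rw [div_eq_inv_mul]; exact Real.mul_rpow (by norm_num) ht.le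
  have htp : (0:ℝ) ≤ t ^ p := Real.rpow_nonneg ht.le p
  rcases le_or_gt 0 p with hp | hp
  · constructor
    · calc min ((2:ℝ) ^ p) ((2:ℝ)⁻¹ ^ p) * t ^ p ≤ (2:ℝ)⁻¹ ^ p * t ^ p :=
          mul_le_mul_of_nonneg_right (min_le_right _ _) htp
        _ = (t / 2) ^ p := e2.symm
        _ ≤ y ^ p := Real.rpow_le_rpow ht2.le h1 hp
    · calc y ^ p ≤ (2 * t) ^ p := Real.rpow_le_rpow hy.le h2 hp
        _ = (2:ℝ) ^ p * t ^ p := e1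
        _ ≤ max ((2:ℝ) ^ p) ((2:ℝ)⁻¹ ^ p) * t ^ p :=
          mul_le_mul_of_nonneg_right (le_max_left _ _) htp
  · constructor
    · calc min ((2:ℝ) ^ p) ((2:ℝ)⁻¹ ^ p) * t ^ p ≤ (2:ℝ) ^ p * t ^ p :=
          mul_le_mul_of_nonneg_right (min_le_left _ _) htp
        _ = (2 * t) ^ p := e1.symm
        _ ≤ y ^ p := Real.rpow_le_rpow_of_nonpos hy h2 hp.le
    · calc y ^ p ≤ (t / 2) ^ p := Real.rpow_le_rpow_of_nonpos ht2 h1 hp.le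
        _ = (2:ℝ)⁻¹ ^ p * t ^ p := e2
        _ ≤ max ((2:ℝ) ^ p) ((2:ℝ)⁻¹ ^ p) * t ^ p :=
          mul_le_mul_of_nonneg_right (le_max_right _ _) htp

/-- Under the conditions `α ∈ (-1,0)`, `ℓ+N+α > 0`, `k+N+α > 0`, `kN < ℓ(N-1) - α`,
the weighted isoperimetric ratio of the unit balls `Ω(t) = B₁((0,…,0,t))` tends to `0`
as `t → +∞`; hence the weighted isoperimetric problem has no minimizer. -/
theorem stmt_6 (N : ℕ) (hN : 2 ≤ N) (k ℓ α : ℝ) (hα : α ∈ Set.Ioo (-1 : ℝ) 0)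
    (hl : 0 < ℓ + N + α) (hk : 0 < k + N + α)
    (hcond : k * N < ℓ * ((N : ℝ) - 1) - α)
    (c : ℝ → EuclideanSpace ℝ (Fin N))
    (hc : ∀ t, c t = EuclideanSpace.single (⟨N - 1, by omega⟩ : Fin N) t)
    (P V : ℝ → ℝ)
    (hP : ∀ t, P t = ∫ x in Metric.sphere (c t) 1,
        ‖x‖ ^ k * (x (⟨N - 1, by omega⟩ : Fin N)) ^ α ∂μH[(N : ℝ) - 1])
    (hV : ∀ t, V t = ∫ x in Metric.ball (c t) 1,
        ‖x‖ ^ ℓ * (x (⟨N - 1, by omega⟩ : Fin N)) ^ α) :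
    Tendsto (fun t => P t / V t ^ ((k + N + α - 1) / (ℓ + N + α))) atTop (𝓝 0) := by
  classical
  set i : Fin N := ⟨N - 1, by omega⟩ with hidef
  have hj : ∀ s : ℝ, c s i = s := fun s => by
    rw [hc]; simp [EuclideanSpace.single_apply]
  -- constants
  set Mk : ℝ := max ((2:ℝ) ^ k) ((2:ℝ)⁻¹ ^ k) with hMk
  set mk : ℝ := min ((2:ℝ) ^ k) ((2:ℝ)⁻¹ ^ k) with hmk
  set Ml : ℝ := max ((2:ℝ) ^ ℓ) ((2:ℝ)⁻¹ ^ ℓ) with hMl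
  set ml : ℝ := min ((2:ℝ) ^ ℓ) ((2:ℝ)⁻¹ ^ ℓ) with hml
  set Ma : ℝ := max ((2:ℝ) ^ α) ((2:ℝ)⁻¹ ^ α) with hMa
  set ma : ℝ := min ((2:ℝ) ^ α) ((2:ℝ)⁻¹ ^ α) with hma
  have h2pos : ∀ p : ℝ, 0 < (2:ℝ) ^ p := fun p => Real.rpow_pos_of_pos two_pos p
  have h2ipos : ∀ p : ℝ, 0 < (2:ℝ)⁻¹ ^ p := fun p => Real.rpow_pos_of_pos (by norm_num) p
  have hMkpos : 0 < Mk := lt_max_of_lt_left (h2pos k)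
  have hmkpos : 0 < mk := lt_min (h2pos k) (h2ipos k)
  have hMlpos : 0 < Ml := lt_max_of_lt_left (h2pos ℓ)
  have hmlpos : 0 < ml := lt_min (h2pos ℓ) (h2ipos ℓ)
  have hMapos : 0 < Ma := lt_max_of_lt_left (h2pos α)
  have hmapos : 0 < ma := lt_min (h2pos α) (h2ipos α)
  set vol : ℝ := (volume (Metric.ball (0 : EuclideanSpace ℝ (Fin N)) 1)).toReal with hvol
  have hvolpos : 0 < vol :=
    ENNReal.toReal_pos (measure_ball_pos volume 0 one_pos).ne' measure_ball_lt_top.ne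
  set S' : ℝ := (μH[(N:ℝ) - 1] (Metric.sphere (0 : EuclideanSpace ℝ (Fin N)) 1)).toReal with hS'
  have hS'nn : 0 ≤ S' := ENNReal.toReal_nonneg
  set q : ℝ := (k + N + α - 1) / (ℓ + N + α) with hq
  set e : ℝ := k + α - (ℓ + α) * q with he
  have hepos : e < 0 := by
    have h1 : k + α < (ℓ + α) * q := by
      rw [hq, mul_div_assoc']
      rw [lt_div_iff₀ hl]
      nlinarith [hcond]
    rw [he]; linarith
  set m' : ℝ := min ((ml * ma * vol) ^ q) ((Ml * Ma * vol) ^ q) with hm'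
  have hcVpos : 0 < ml * ma * vol := mul_pos (mul_pos hmlpos hmapos) hvolpos
  have hCVpos : 0 < Ml * Ma * vol := mul_pos (mul_pos hMlpos hMapos) hvolpos
  have hm'pos : 0 < m' :=
    lt_min (Real.rpow_pos_of_pos hcVpos q) (Real.rpow_pos_of_pos hCVpos q)
  set K : ℝ := Mk * Ma * S' / m' with hK
  have hKnn : 0 ≤ K :=
    div_nonneg (mul_nonneg (mul_nonneg hMkpos.le hMapos.le) hS'nn) hm'pos.le
  -- pointwise bounds
  have bound : ∀ (p t : ℝ), 2 ≤ t → ∀ x : EuclideanSpace ℝ (Fin N), dist x (c t) ≤ 1 →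
      0 < x i ∧
      min ((2:ℝ) ^ p) ((2:ℝ)⁻¹ ^ p) * ma * t ^ (p + α) ≤ ‖x‖ ^ p * (x i) ^ α ∧
      ‖x‖ ^ p * (x i) ^ α ≤ max ((2:ℝ) ^ p) ((2:ℝ)⁻¹ ^ p) * Ma * t ^ (p + α) := by
    intro p t ht x hx
    have ht0 : (0:ℝ) < t := by linarith
    have hct : ‖c t‖ = t := by
      rw [hc, EuclideanSpace.norm_single, Real.norm_eq_abs, abs_of_pos ht0]
    have hxc : ‖x - c t‖ ≤ 1 := by rwa [← dist_eq_norm]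
    have h1 : t - 1 ≤ ‖x‖ := by
      have h := norm_sub_norm_le (c t) x
      rw [norm_sub_rev] at h; linarith
    have h2 : ‖x‖ ≤ t + 1 := by
      have h := norm_sub_norm_le x (c t); linarith
    have hco : |x i - t| ≤ 1 := by
      have hxi : (x - c t) i = x i - t := by
        have : (x - c t) i = x i - (c t) i := by simp
        rw [this, hj]
      calc |x i - t| = |(x - c t) i| := by rw [hxi]
        _ ≤ ‖x - c t‖ := stmt6_coord_le _ _
        _ ≤ 1 := hxc
    obtain ⟨h3, h4⟩ := abs_le.mp hco
    have hxi1 : t / 2 ≤ x i := by linarith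
    have hxi2 : x i ≤ 2 * t := by linarith
    have hn1 : t / 2 ≤ ‖x‖ := by linarith
    have hn2 : ‖x‖ ≤ 2 * t := by linarith
    have hxipos : 0 < x i := lt_of_lt_of_le (by linarith) hxi1
    obtain ⟨la, ua⟩ := stmt6_rpow_bounds α ht0 hxi1 hxi2
    obtain ⟨lp, up⟩ := stmt6_rpow_bounds p ht0 hn1 hn2
    have htpa : (0:ℝ) ≤ t ^ α := Real.rpow_nonneg ht0.le α
    have htpp : (0:ℝ) ≤ t ^ p := Real.rpow_nonneg ht0.le p
    refine ⟨hxipos, ?_, ?_⟩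
    · calc min ((2:ℝ) ^ p) ((2:ℝ)⁻¹ ^ p) * ma * t ^ (p + α)
          = (min ((2:ℝ) ^ p) ((2:ℝ)⁻¹ ^ p) * t ^ p) * (ma * t ^ α) := by
            rw [Real.rpow_add ht0]; ring
        _ ≤ ‖x‖ ^ p * (x i) ^ α :=
            mul_le_mul lp la (mul_nonneg hmapos.le htpa) (Real.rpow_nonneg (norm_nonneg x) p)
    · calc ‖x‖ ^ p * (x i) ^ α
          ≤ (max ((2:ℝ) ^ p) ((2:ℝ)⁻¹ ^ p) * t ^ p) * (Ma * t ^ α) :=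
            mul_le_mul up ua (Real.rpow_nonneg hxipos.le α)
              (mul_nonneg (le_max_of_le_left (h2pos p).le) htpp)
        _ = max ((2:ℝ) ^ p) ((2:ℝ)⁻¹ ^ p) * Ma * t ^ (p + α) := by
            rw [Real.rpow_add ht0]; ring
  have hmeasl : Measurable (fun x : EuclideanSpace ℝ (Fin N) => ‖x‖ ^ ℓ * (x i) ^ α) := by fun_prop
  -- main eventual bound
  have key : ∀ᶠ t in atTop,
      0 ≤ P t / V t ^ q ∧ P t / V t ^ q ≤ K * t ^ e := by
    filter_upwards [eventually_ge_atTop (2:ℝ)] with t ht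
    have ht0 : (0:ℝ) < t := by linarith
    -- V estimates
    have hVint : IntegrableOn (fun x : EuclideanSpace ℝ (Fin N) => ‖x‖ ^ ℓ * (x i) ^ α) (Metric.ball (c t) 1) := by
      refine Integrable.mono' (g := fun _ => Ml * Ma * t ^ (ℓ + α))
        (integrableOn_const measure_ball_lt_top.ne)
        hmeasl.aestronglyMeasurable ?_
      filter_upwards [ae_restrict_mem measurableSet_ball] with x hx
      obtain ⟨hxipos, hlow, hup⟩ := bound ℓ t ht x (mem_ball.mp hx).le
      have h0 : 0 ≤ ‖x‖ ^ ℓ * (x i) ^ α :=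
        mul_nonneg (Real.rpow_nonneg (norm_nonneg x) ℓ) (Real.rpow_nonneg hxipos.le α)
      rw [Real.norm_eq_abs, abs_of_nonneg h0]
      exact hup
    have hballm : volume (Metric.ball (c t) 1) = volume (Metric.ball (0 : EuclideanSpace ℝ (Fin N)) 1) :=
      Measure.addHaar_ball_center volume (c t) 1
    have hVlow : ml * ma * vol * t ^ (ℓ + α) ≤ V t := by
      have h := setIntegral_ge_of_const_le (μ := volume) measurableSet_ball
        measure_ball_lt_top.ne
        (fun x hx => (bound ℓ t ht x (mem_ball.mp hx).le).2.1) hVint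
      rw [hV t]
      calc ml * ma * vol * t ^ (ℓ + α)
          = ml * ma * t ^ (ℓ + α) * (volume (Metric.ball (c t) 1)).toReal := by
            rw [hballm, ← hvol]; ring
        _ ≤ _ := by rw [smul_eq_mul, measureReal_def, ← hml] at h; linarith
    have hVup : V t ≤ Ml * Ma * vol * t ^ (ℓ + α) := by
      rw [hV t]
      calc (∫ x in Metric.ball (c t) 1, ‖x‖ ^ ℓ * (x i) ^ α)
          ≤ ∫ _x in Metric.ball (c t) 1, Ml * Ma * t ^ (ℓ + α) :=
            setIntegral_mono_on hVint (integrableOn_const measure_ball_lt_top.ne)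
              measurableSet_ball (fun x hx => (bound ℓ t ht x (mem_ball.mp hx).le).2.2)
        _ = (volume (Metric.ball (c t) 1)).toReal • (Ml * Ma * t ^ (ℓ + α)) :=
            setIntegral_const _
        _ = Ml * Ma * vol * t ^ (ℓ + α) := by
            rw [smul_eq_mul, hballm, ← hvol]; ring
    have hVpos : 0 < V t :=
      lt_of_lt_of_le (mul_pos hcVpos (Real.rpow_pos_of_pos ht0 _)) hVlow
    have hVqpos : 0 < V t ^ q := Real.rpow_pos_of_pos hVpos q
    have hVq : m' * t ^ ((ℓ + α) * q) ≤ V t ^ q := by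
      have htlq : (0:ℝ) ≤ t ^ ((ℓ + α) * q) := Real.rpow_nonneg ht0.le _
      rcases le_or_gt 0 q with hq0 | hq0
      · calc m' * t ^ ((ℓ + α) * q) ≤ (ml * ma * vol) ^ q * t ^ ((ℓ + α) * q) :=
            mul_le_mul_of_nonneg_right (min_le_left _ _) htlq
          _ = (ml * ma * vol * t ^ (ℓ + α)) ^ q := by
              rw [Real.rpow_mul ht0.le,
                ← Real.mul_rpow hcVpos.le (Real.rpow_nonneg ht0.le _)]
          _ ≤ V t ^ q := Real.rpow_le_rpow
              (mul_nonneg hcVpos.le (Real.rpow_nonneg ht0.le _)) hVlow hq0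
      · calc m' * t ^ ((ℓ + α) * q) ≤ (Ml * Ma * vol) ^ q * t ^ ((ℓ + α) * q) :=
            mul_le_mul_of_nonneg_right (min_le_right _ _) htlq
          _ = (Ml * Ma * vol * t ^ (ℓ + α)) ^ q := by
              rw [Real.rpow_mul ht0.le,
                ← Real.mul_rpow hCVpos.le (Real.rpow_nonneg ht0.le _)]
          _ ≤ V t ^ q := Real.rpow_le_rpow_of_nonpos hVpos hVup hq0.le
    -- P estimates
    have hPnn : 0 ≤ P t := by
      rw [hP t]
      refine setIntegral_nonneg Metric.isClosed_sphere.measurableSet fun x hx => ?_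
      exact mul_nonneg (Real.rpow_nonneg (norm_nonneg x) k)
        (Real.rpow_nonneg (bound k t ht x (mem_sphere.mp hx).le).1.le α)
    have hPup : P t ≤ Mk * Ma * S' * t ^ (k + α) := by
      have hrhs : 0 ≤ Mk * Ma * S' * t ^ (k + α) :=
        mul_nonneg (mul_nonneg (mul_nonneg hMkpos.le hMapos.le) hS'nn)
          (Real.rpow_nonneg ht0.le _)
      rw [hP t]
      by_cases hint : IntegrableOn (fun x : EuclideanSpace ℝ (Fin N) => ‖x‖ ^ k * (x i) ^ α)
          (Metric.sphere (c t) 1) μH[(N:ℝ) - 1]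
      · have hεpos : (0:ℝ) < mk * ma * t ^ (k + α) :=
          mul_pos (mul_pos hmkpos hmapos) (Real.rpow_pos_of_pos ht0 _)
        have hconst : Integrable (fun _ : EuclideanSpace ℝ (Fin N) => mk * ma * t ^ (k + α))
            (μH[(N:ℝ) - 1].restrict (Metric.sphere (c t) 1)) := by
          refine Integrable.mono' hint aestronglyMeasurable_const ?_
          filter_upwards [ae_restrict_mem Metric.isClosed_sphere.measurableSet] with x hx
          rw [Real.norm_eq_abs, abs_of_pos hεpos]
          exact (bound k t ht x (mem_sphere.mp hx).le).2.1
        have hfin : μH[(N:ℝ) - 1] (Metric.sphere (c t) 1) < ⊤ := by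
          rcases integrable_const_iff.mp hconst with h | h
          · exact absurd h hεpos.ne'
          · have h' := h.measure_univ_lt_top; rwa [Measure.restrict_apply_univ] at h'
        have htrans : μH[(N:ℝ) - 1] (Metric.sphere (c t) 1)
            = μH[(N:ℝ) - 1] (Metric.sphere (0 : EuclideanSpace ℝ (Fin N)) 1) := by
          rw [← (IsometryEquiv.addLeft (c t)).hausdorffMeasure_image ((N:ℝ) - 1)
            (Metric.sphere 0 1), IsometryEquiv.image_sphere]
          simp
        calc (∫ x in Metric.sphere (c t) 1, ‖x‖ ^ k * (x i) ^ α ∂μH[(N:ℝ) - 1])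
            ≤ ∫ _x in Metric.sphere (c t) 1, Mk * Ma * t ^ (k + α) ∂μH[(N:ℝ) - 1] :=
              setIntegral_mono_on hint (integrableOn_const hfin.ne)
                Metric.isClosed_sphere.measurableSet (fun x hx => (bound k t ht x (mem_sphere.mp hx).le).2.2)
          _ = (μH[(N:ℝ) - 1] (Metric.sphere (c t) 1)).toReal • (Mk * Ma * t ^ (k + α)) :=
              setIntegral_const _
          _ = Mk * Ma * S' * t ^ (k + α) := by
              rw [smul_eq_mul, htrans, ← hS']; ring
      · rw [integral_undef hint]
        exact hrhs
    -- combine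
    have hratio : P t / V t ^ q ≤ K * t ^ e := by
      rw [div_le_iff₀ hVqpos]
      calc P t ≤ Mk * Ma * S' * t ^ (k + α) := hPup
        _ = K * t ^ e * (m' * t ^ ((ℓ + α) * q)) := by
            have h1 : K * m' = Mk * Ma * S' := div_mul_cancel₀ _ hm'pos.ne'
            have h2 : t ^ e * t ^ ((ℓ + α) * q) = t ^ (k + α) := by
              rw [← Real.rpow_add ht0]
              congr 1
              rw [he]; ring
            calc Mk * Ma * S' * t ^ (k + α)
                = K * m' * (t ^ e * t ^ ((ℓ + α) * q)) := by rw [h1, h2]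
              _ = K * t ^ e * (m' * t ^ ((ℓ + α) * q)) := by ring
        _ ≤ K * t ^ e * V t ^ q := by
            refine mul_le_mul_of_nonneg_left hVq ?_
            exact mul_nonneg hKnn (Real.rpow_nonneg ht0.le _)
    exact ⟨div_nonneg hPnn hVqpos.le, hratio⟩
  -- squeeze
  have hg : Tendsto (fun t : ℝ => K * t ^ e) atTop (𝓝 0) := by
    have h1 : Tendsto (fun t : ℝ => t ^ e) atTop (𝓝 0) := by
      have := tendsto_rpow_neg_atTop (y := -e) (by linarith)
      simpa using this
    simpa using h1.const_mul K
  exact squeeze_zero' (key.mono fun t h => h.1) (key.mono fun t h => h.2) hg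
end

section
/- Let N ≥ 2, and let f, g : ℝ^N → (0,∞) satisfy f(x) ≤ c₁|x|^{-α} and g(x) ≥ c₂|x|^{-β} for |x| ≥ R₁, where α, β, R₁, c₁, c₂ > 0, β ≤ N, and α > β(N-1)/N. Fix d > 0. For t > 0 let z(t) = (t,0,…,0) and choose R(t) > 0 with ∫_{B_{R(t)}(z(t))} g dx = d. Then P_f(B_{R(t)}(z(t))) = ∫_{∂B_{R(t)}(z(t))} f dH^{N-1} → 0 as t → +∞. In particular, the problem of minimizing P_f(M) among measurable sets M with ∫_M g dx = d has no solution (the infimum is 0 and is not attained). -/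
open MeasureTheory Filter Topology Metric
open scoped ENNReal NNReal Pointwise

section IsoAux

/-- Radial projection is `2`-Lipschitz outside the unit ball. -/
lemma isoAux_radial_lip {E : Type*} [NormedAddCommGroup E] [NormedSpace ℝ E] :
    LipschitzOnWith 2 (fun x : E => ‖x‖⁻¹ • x) {x : E | 1 ≤ ‖x‖} := by
  rw [lipschitzOnWith_iff_dist_le_mul]
  intro x hx y hy
  simp only [Set.mem_setOf_eq] at hx hy
  have hx0 : (0:ℝ) < ‖x‖ := lt_of_lt_of_le one_pos hx
  have hy0 : (0:ℝ) < ‖y‖ := lt_of_lt_of_le one_pos hy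
  rw [dist_eq_norm, dist_eq_norm]
  have key : ‖x‖⁻¹ • x - ‖y‖⁻¹ • y = ‖x‖⁻¹ • (x - y) + (‖x‖⁻¹ - ‖y‖⁻¹) • y := by
    simp [smul_sub, sub_smul]
  rw [key]
  have h1 : ‖‖x‖⁻¹ • (x - y)‖ ≤ ‖x - y‖ := by
    rw [norm_smul, norm_inv, norm_norm]
    calc ‖x‖⁻¹ * ‖x - y‖ ≤ 1 * ‖x - y‖ := by
          apply mul_le_mul_of_nonneg_right _ (norm_nonneg _)
          rw [inv_le_one_iff₀]; right; exact hx
      _ = ‖x - y‖ := one_mul _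
  have h2 : ‖(‖x‖⁻¹ - ‖y‖⁻¹) • y‖ ≤ ‖x - y‖ := by
    rw [norm_smul, Real.norm_eq_abs]
    have e1 : (‖x‖)⁻¹ - (‖y‖)⁻¹ = (‖y‖ - ‖x‖) / (‖x‖ * ‖y‖) := by field_simp
    rw [e1, abs_div, abs_of_pos (mul_pos hx0 hy0)]
    have h3 : |‖y‖ - ‖x‖| ≤ ‖x - y‖ := by rw [norm_sub_rev]; exact abs_norm_sub_norm_le y x
    have e2 : |‖y‖ - ‖x‖| / (‖x‖ * ‖y‖) * ‖y‖ = |‖y‖ - ‖x‖| / ‖x‖ := by field_simp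
    rw [e2]
    exact le_trans (div_le_self (abs_nonneg _) hx) h3
  calc ‖‖x‖⁻¹ • (x - y) + (‖x‖⁻¹ - ‖y‖⁻¹) • y‖ ≤ ‖‖x‖⁻¹ • (x - y)‖ + ‖(‖x‖⁻¹ - ‖y‖⁻¹) • y‖ :=
        norm_add_le _ _
    _ ≤ ‖x - y‖ + ‖x - y‖ := add_le_add h1 h2
    _ = 2 * ‖x - y‖ := by ring
    _ = (2:ℝ≥0) * ‖x - y‖ := by norm_num

noncomputable def isoAuxPsi (n : ℕ) (i : Fin (n+1)) (c : ℝ) (y : Fin n → ℝ) :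
    EuclideanSpace ℝ (Fin (n+1)) :=
  (WithLp.equiv 2 (Fin (n+1) → ℝ)).symm (i.insertNth c y)

lemma isoAuxPsi_same (n : ℕ) (i : Fin (n+1)) (c : ℝ) (y : Fin n → ℝ) :
    isoAuxPsi n i c y i = c := by
  simp [isoAuxPsi, WithLp.equiv_symm_apply]

lemma isoAuxPsi_succAbove (n : ℕ) (i : Fin (n+1)) (c : ℝ) (y : Fin n → ℝ) (k : Fin n) :
    isoAuxPsi n i c y (i.succAbove k) = y k := by
  simp [isoAuxPsi, WithLp.equiv_symm_apply]

lemma isoAuxPsi_lip (n : ℕ) (i : Fin (n+1)) (c : ℝ) :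
    LipschitzWith (n+1 : ℝ≥0) (isoAuxPsi n i c) := by
  apply LipschitzWith.of_dist_le_mul
  intro y y'
  have hd : (0:ℝ) ≤ dist y y' := dist_nonneg
  have hsum : ∑ j, (isoAuxPsi n i c y j - isoAuxPsi n i c y' j)^2 ≤ (n:ℝ) * (dist y y')^2 := by
    rw [Fin.sum_univ_succAbove _ i]
    simp only [isoAuxPsi_same, isoAuxPsi_succAbove, sub_self, ne_eq, OfNat.ofNat_ne_zero,
      not_false_eq_true, zero_pow, zero_add]
    calc ∑ k : Fin n, (y k - y' k)^2 ≤ ∑ k : Fin n, (dist y y')^2 := by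
          apply Finset.sum_le_sum
          intro k _
          have h1 : |y k - y' k| ≤ dist y y' := by
            rw [← Real.dist_eq]; exact dist_le_pi_dist y y' k
          calc (y k - y' k)^2 = |y k - y' k|^2 := (sq_abs _).symm
            _ ≤ (dist y y')^2 := by apply pow_le_pow_left₀ (abs_nonneg _) h1
      _ = (n:ℝ) * (dist y y')^2 := by simp [Finset.sum_const]
  calc dist (isoAuxPsi n i c y) (isoAuxPsi n i c y')
      = Real.sqrt (∑ j, dist (isoAuxPsi n i c y j) (isoAuxPsi n i c y' j)^2) :=
        EuclideanSpace.dist_eq _ _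
    _ ≤ Real.sqrt (((n:ℝ)+1)^2 * (dist y y')^2) := by
        apply Real.sqrt_le_sqrt
        simp only [Real.dist_eq]
        calc ∑ j, |isoAuxPsi n i c y j - isoAuxPsi n i c y' j|^2
            = ∑ j, (isoAuxPsi n i c y j - isoAuxPsi n i c y' j)^2 := by simp [sq_abs]
          _ ≤ (n:ℝ) * (dist y y')^2 := hsum
          _ ≤ ((n:ℝ)+1)^2 * (dist y y')^2 := by
              nlinarith [mul_nonneg (by positivity : (0:ℝ) ≤ (n:ℝ)^2 + (n:ℝ) + 1)
                (sq_nonneg (dist y y'))]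
    _ = ((n:ℝ)+1) * dist y y' := by
        rw [← mul_pow, Real.sqrt_sq (by positivity)]

lemma isoAux_sphere_cover (n : ℕ) :
    Metric.sphere (0 : EuclideanSpace ℝ (Fin (n+1))) 1 ⊆
      ⋃ (i : Fin (n+1)) (b : Bool),
        (fun x : EuclideanSpace ℝ (Fin (n+1)) => ‖x‖⁻¹ • x) ''
          ((isoAuxPsi n i (if b then 1 else -1) '' Metric.closedBall 0 1)
            ∩ {x | 1 ≤ ‖x‖}) := by
  intro u hu
  have hu1 : ‖u‖ = 1 := by simpa [dist_eq_norm] using hu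
  obtain ⟨i, -, hi⟩ := Finset.exists_max_image Finset.univ (fun j => |u j|) ⟨0, Finset.mem_univ 0⟩
  have hi' : ∀ j, |u j| ≤ |u i| := fun j => hi j (Finset.mem_univ j)
  have ha : 0 < |u i| := by
    rcases lt_or_ge 0 (|u i|) with h | h
    · exact h
    · exfalso
      have hz : ∀ j, u j = 0 := fun j =>
        abs_eq_zero.mp (le_antisymm (le_trans (hi' j) h) (abs_nonneg _))
      have : ‖u‖ = 0 := by
        rw [EuclideanSpace.norm_eq]
        simp [hz]
      rw [hu1] at this; norm_num at this
  set a := |u i| with hadef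
  set x : EuclideanSpace ℝ (Fin (n+1)) := a⁻¹ • u with hxdef
  have hax : ∀ j, x j = a⁻¹ * u j := fun j => rfl
  have hxnorm : ‖x‖ = a⁻¹ := by
    rw [hxdef, norm_smul, hu1, norm_inv, Real.norm_eq_abs, abs_abs, mul_one]
  have haone : a ≤ 1 := by
    have : a^2 ≤ ∑ j, u j ^ 2 := by
      rw [hadef, sq_abs]
      exact Finset.single_le_sum (f := fun j => u j ^ 2) (fun j _ => sq_nonneg _)
        (Finset.mem_univ i)
    have h2 : Real.sqrt (a^2) ≤ Real.sqrt (∑ j, u j ^ 2) := Real.sqrt_le_sqrt this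
    have h3 : Real.sqrt (∑ j, u j ^ 2) = ‖u‖ := by
      rw [EuclideanSpace.norm_eq]
      congr 1
      refine Finset.sum_congr rfl fun j _ => ?_
      rw [Real.norm_eq_abs, sq_abs]
    rw [Real.sqrt_sq (abs_nonneg _), h3, hu1] at h2
    exact h2
  have hx1 : 1 ≤ ‖x‖ := by
    rw [hxnorm]
    exact one_le_inv_iff₀.mpr ⟨ha, haone⟩
  set b : Bool := decide (0 ≤ u i) with hbdef
  set c : ℝ := if b then 1 else -1 with hcdef
  have hxi : x i = c := by
    rw [hax i, hcdef, hbdef]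
    rcases le_or_gt 0 (u i) with h | h
    · rw [if_pos (by simpa using h)]
      have hne : u i ≠ 0 := by
        intro hz0; rw [hadef, hz0, abs_zero] at ha; exact lt_irrefl _ ha
      rw [hadef, abs_of_nonneg h, inv_mul_cancel₀ hne]
    · rw [if_neg (by simpa using not_le.mpr h)]
      rw [hadef, abs_of_neg h]
      field_simp
      rw [div_self (ne_of_lt h)]
  refine Set.mem_iUnion.mpr ⟨i, Set.mem_iUnion.mpr ⟨b, ?_⟩⟩
  refine ⟨x, ⟨⟨fun k => x (i.succAbove k), ?_, ?_⟩, hx1⟩, ?_⟩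
  · rw [Metric.mem_closedBall, dist_zero_right]
    apply pi_norm_le_iff_of_nonneg zero_le_one |>.mpr
    intro k
    rw [Real.norm_eq_abs, hax, abs_mul, abs_inv, abs_abs]
    calc a⁻¹ * |u (i.succAbove k)| ≤ a⁻¹ * a := by
          apply mul_le_mul_of_nonneg_left (hi' _) (by positivity)
      _ = 1 := inv_mul_cancel₀ (ne_of_gt ha)
  · ext j
    exact i.succAboveCases (by rw [isoAuxPsi_same, hxi])
      (fun k => isoAuxPsi_succAbove n i c _ k) j
  · show ‖x‖⁻¹ • x = u
    rw [hxnorm, inv_inv, hxdef, smul_smul, mul_inv_cancel₀ (ne_of_gt ha), one_smul]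

lemma isoAux_sphere_haus_fin (n : ℕ) :
    μH[(n : ℝ)] (Metric.sphere (0 : EuclideanSpace ℝ (Fin (n+1))) 1) < ⊤ := by
  have hn : (0:ℝ) ≤ (n:ℝ) := Nat.cast_nonneg n
  have hpiece : ∀ (i : Fin (n+1)) (b : Bool),
      μH[(n : ℝ)] ((fun x : EuclideanSpace ℝ (Fin (n+1)) => ‖x‖⁻¹ • x) ''
          ((isoAuxPsi n i (if b then 1 else -1) '' Metric.closedBall 0 1)
            ∩ {x | 1 ≤ ‖x‖})) < ⊤ := by
    intro i b
    set c : ℝ := if b then 1 else -1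
    set A : Set (EuclideanSpace ℝ (Fin (n+1))) := isoAuxPsi n i c '' Metric.closedBall 0 1
    have h1 : μH[(n : ℝ)] ((fun x : EuclideanSpace ℝ (Fin (n+1)) => ‖x‖⁻¹ • x) ''
        (A ∩ {x | 1 ≤ ‖x‖})) ≤ (2:ℝ≥0∞) ^ (n:ℝ) * μH[(n : ℝ)] (A ∩ {x | 1 ≤ ‖x‖}) := by
      have := (isoAux_radial_lip (E := EuclideanSpace ℝ (Fin (n+1)))).mono
        (Set.inter_subset_right (s := A))
      simpa using this.hausdorffMeasure_image_le hn
    have h2 : μH[(n : ℝ)] (A ∩ {x | 1 ≤ ‖x‖}) ≤ μH[(n : ℝ)] A :=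
      measure_mono Set.inter_subset_left
    have h3 : μH[(n : ℝ)] A ≤ ((n+1:ℝ≥0) : ℝ≥0∞) ^ (n:ℝ) *
        μH[(n : ℝ)] (Metric.closedBall (0 : Fin n → ℝ) 1) := by
      simpa using (isoAuxPsi_lip n i c).hausdorffMeasure_image_le hn (Metric.closedBall 0 1)
    have h4 : μH[(n : ℝ)] (Metric.closedBall (0 : Fin n → ℝ) 1)
        = volume (Metric.closedBall (0 : Fin n → ℝ) 1) := by
      have := hausdorffMeasure_pi_real (ι := Fin n)
      rw [Fintype.card_fin] at this
      rw [this]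
    have h5 : volume (Metric.closedBall (0 : Fin n → ℝ) 1) < ⊤ := measure_closedBall_lt_top
    calc μH[(n : ℝ)] ((fun x : EuclideanSpace ℝ (Fin (n+1)) => ‖x‖⁻¹ • x) ''
          (A ∩ {x | 1 ≤ ‖x‖}))
        ≤ (2:ℝ≥0∞) ^ (n:ℝ) * μH[(n : ℝ)] (A ∩ {x | 1 ≤ ‖x‖}) := h1
      _ ≤ (2:ℝ≥0∞) ^ (n:ℝ) * (((n+1:ℝ≥0) : ℝ≥0∞) ^ (n:ℝ) *
            volume (Metric.closedBall (0 : Fin n → ℝ) 1)) := by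
          apply mul_le_mul_right (le_trans h2 (le_trans h3 (by rw [h4])))
      _ < ⊤ := by
          apply ENNReal.mul_lt_top
          · exact ENNReal.rpow_lt_top_of_nonneg hn (by norm_num)
          · exact ENNReal.mul_lt_top (ENNReal.rpow_lt_top_of_nonneg hn (by simp)) h5
  calc μH[(n : ℝ)] (Metric.sphere (0 : EuclideanSpace ℝ (Fin (n+1))) 1)
      ≤ ∑' (i : Fin (n+1)), ∑' (b : Bool), μH[(n : ℝ)]
          ((fun x : EuclideanSpace ℝ (Fin (n+1)) => ‖x‖⁻¹ • x) ''
          ((isoAuxPsi n i (if b then 1 else -1) '' Metric.closedBall 0 1)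
            ∩ {x | 1 ≤ ‖x‖})) := by
        refine le_trans (measure_mono (isoAux_sphere_cover n)) ?_
        refine le_trans (measure_iUnion_le _) (ENNReal.tsum_le_tsum fun i => measure_iUnion_le _)
      _ < ⊤ := by
        rw [tsum_fintype]
        apply ENNReal.sum_lt_top.mpr
        intro i _
        rw [tsum_fintype]
        apply ENNReal.sum_lt_top.mpr
        intro b _
        exact hpiece i b

/-- Scaling and translation of Hausdorff measure of spheres. -/
lemma isoAux_sphere_scale (N : ℕ) (z : EuclideanSpace ℝ (Fin N)) (r : ℝ) (hr : 0 < r)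
    (dd : ℝ) (hd : 0 ≤ dd) :
    μH[dd] (Metric.sphere z r)
      = ENNReal.ofReal (r ^ dd) * μH[dd] (Metric.sphere (0 : EuclideanSpace ℝ (Fin N)) 1) := by
  have htrans : μH[dd] (Metric.sphere z r)
      = μH[dd] (Metric.sphere (0 : EuclideanSpace ℝ (Fin N)) r) := by
    have himg : Metric.sphere z r = (fun x => z + x) ''
        Metric.sphere (0 : EuclideanSpace ℝ (Fin N)) r := by
      ext x
      simp only [Set.mem_image, mem_sphere_iff_norm, sub_zero]
      constructor
      · intro h; exact ⟨x - z, by simpa [norm_sub_rev] using h, by abel⟩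
      · rintro ⟨y, hy, rfl⟩; simpa [add_comm, norm_sub_rev] using hy
    rw [himg, Isometry.hausdorffMeasure_image (isometry_add_left z) (Or.inl hd)]
  have hsmul : Metric.sphere (0 : EuclideanSpace ℝ (Fin N)) r
      = r • Metric.sphere (0 : EuclideanSpace ℝ (Fin N)) 1 := by
    rw [smul_sphere' hr.ne' (0 : EuclideanSpace ℝ (Fin N)) 1]
    simp [abs_of_pos hr, Real.norm_eq_abs]
  rw [htrans, hsmul, MeasureTheory.Measure.hausdorffMeasure_smul₀ hd hr.ne']
  rw [ENNReal.smul_def, smul_eq_mul]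
  rw [ENNReal.coe_rpow_of_nonneg _ hd]
  congr 1
  rw [← ENNReal.ofReal_rpow_of_pos hr]
  congr 1
  rw [Real.nnnorm_of_nonneg hr.le, ENNReal.ofReal, Real.toNNReal_of_nonneg hr.le]

lemma isoAux_arith (N : ℕ) (β c₂ ω u : ℝ) (hβN : β ≤ N) (hc₂ : 0 < c₂)
    (hω : 0 < ω) (hu : 1 ≤ u) :
    c₂ * ((3:ℝ)^N)⁻¹ * ω ≤ (c₂ * ((3/2)*u) ^ (-β)) * ((u/2)^N * ω) := by
  have hu0 : 0 < u := lt_of_lt_of_le one_pos hu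
  have hb : (1:ℝ) ≤ (3/2)*u := by nlinarith
  have h1 : ((3/2)*u : ℝ) ^ (-(N:ℝ)) ≤ ((3/2)*u) ^ (-β) :=
    Real.rpow_le_rpow_of_exponent_le hb (by linarith)
  have h2 : ((3/2)*u : ℝ) ^ (-(N:ℝ)) = (((3/2)*u)^N)⁻¹ := by
    rw [Real.rpow_neg (by positivity), Real.rpow_natCast]
  have key : ((3:ℝ)^N)⁻¹ ≤ (((3/2)*u)^N)⁻¹ * (u/2)^N := by
    rw [inv_mul_eq_div, ← div_pow]
    have he : (u/2)/((3/2)*u) = 3⁻¹ := by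
      field_simp
    rw [he, inv_pow]
  calc c₂ * ((3:ℝ)^N)⁻¹ * ω ≤ c₂ * ((((3/2)*u)^N)⁻¹ * (u/2)^N) * ω := by
        apply mul_le_mul_of_nonneg_right _ hω.le
        apply mul_le_mul_of_nonneg_left key hc₂.le
    _ ≤ (c₂ * ((3/2)*u) ^ (-β)) * ((u/2)^N * ω) := by
        rw [← h2]
        nlinarith [mul_le_mul_of_nonneg_right h1
          (le_of_lt (show (0:ℝ) < (u/2)^N * ω by positivity)),
          Real.rpow_pos_of_pos (show (0:ℝ) < (3/2)*u by positivity) (-β)]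

end IsoAux

set_option maxHeartbeats 2000000 in
/-- If `f(x) ≤ c₁|x|^{-α}` and `g(x) ≥ c₂|x|^{-β}` for `|x| ≥ R₁`, with `β ≤ N` and
`α > β(N-1)/N`, then the weighted perimeter of balls `B_{R(t)}((t,0,…,0))` of fixed
weighted measure `d` tends to `0` as `t → ∞`; in particular the isoperimetric
problem has no solution. -/
theorem stmt_13 (N : ℕ) (hN : 2 ≤ N)
    (f g : EuclideanSpace ℝ (Fin N) → ℝ)
    (hf0 : ∀ x, 0 < f x) (hg0 : ∀ x, 0 < g x)
    (α β R₁ c₁ c₂ : ℝ) (hα : 0 < α) (hβ : 0 < β) (hR₁ : 0 < R₁)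
    (hc₁ : 0 < c₁) (hc₂ : 0 < c₂)
    (hfb : ∀ x : EuclideanSpace ℝ (Fin N), R₁ ≤ ‖x‖ → f x ≤ c₁ * ‖x‖ ^ (-α))
    (hgb : ∀ x : EuclideanSpace ℝ (Fin N), R₁ ≤ ‖x‖ → g x ≥ c₂ * ‖x‖ ^ (-β))
    (hβN : β ≤ N) (hαβ : α > β * ((N : ℝ) - 1) / N)
    (d : ℝ) (hd : 0 < d)
    (z : ℝ → EuclideanSpace ℝ (Fin N))
    (hz : ∀ t, z t = EuclideanSpace.single (⟨0, by omega⟩ : Fin N) t)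
    (R : ℝ → ℝ) (hRpos : ∀ t, 0 < t → 0 < R t)
    (hRmeas : ∀ t, 0 < t → (∫ x in Metric.ball (z t) (R t), g x) = d) :
    Tendsto (fun t => ∫ x in Metric.sphere (z t) (R t), f x ∂μH[(N : ℝ) - 1])
      atTop (𝓝 0) ∧
    ¬ ∃ M : Set (EuclideanSpace ℝ (Fin N)),
        (∫ x in M, g x) = d ∧
        0 < (∫ x in frontier M, f x ∂μH[(N : ℝ) - 1]) ∧
        ∀ M' : Set (EuclideanSpace ℝ (Fin N)), (∫ x in M', g x) = d →
          (∫ x in frontier M, f x ∂μH[(N : ℝ) - 1])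
            ≤ ∫ x in frontier M', f x ∂μH[(N : ℝ) - 1] := by
  obtain ⟨n, rfl⟩ : ∃ n, N = n + 1 := ⟨N - 1, by omega⟩
  set Nr : ℝ := ((n+1 : ℕ) : ℝ) with hNrdef
  have hNr1 : (1:ℝ) ≤ Nr := by rw [hNrdef]; push_cast; linarith [Nat.cast_nonneg (α := ℝ) n]
  have hNr0 : (0:ℝ) < Nr := lt_of_lt_of_le one_pos hNr1
  have hNrn : Nr - 1 = (n : ℝ) := by rw [hNrdef]; push_cast; ring
  have hNrd : (0:ℝ) ≤ Nr - 1 := by linarith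
  clear_value Nr
  haveI : Nontrivial (EuclideanSpace ℝ (Fin (n+1))) := by
    refine ⟨EuclideanSpace.single (⟨0, by omega⟩ : Fin (n+1)) 1, 0, fun h => ?_⟩
    have := congrArg (fun v => v (⟨0, by omega⟩ : Fin (n+1))) h
    simp [EuclideanSpace.single_apply] at this
  -- volume constants
  set ω : ℝ := (volume (ball (0 : EuclideanSpace ℝ (Fin (n+1))) 1)).toReal with hωdef
  have hω : 0 < ω :=
    ENNReal.toReal_pos (measure_ball_pos _ _ one_pos).ne' measure_ball_lt_top.ne
  have hvol : ∀ (p : EuclideanSpace ℝ (Fin (n+1))) (ρ : ℝ), 0 ≤ ρ →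
      (volume (ball p ρ)).toReal = ρ^(n+1) * ω := by
    intro p ρ hρ
    rw [Measure.addHaar_ball _ _ hρ, finrank_euclideanSpace_fin, ENNReal.toReal_mul,
      ENNReal.toReal_ofReal (pow_nonneg hρ _), hωdef]
  clear_value ω
  have hznorm : ∀ t : ℝ, 0 < t → ‖z t‖ = t := by
    intro t ht
    rw [hz t, EuclideanSpace.norm_single, Real.norm_eq_abs, abs_of_pos ht]
  -- integrability of g on the balls
  have hInt : ∀ t : ℝ, 0 < t → IntegrableOn g (ball (z t) (R t)) := by
    intro t ht
    by_contra hcon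
    have h0 := integral_undef hcon
    rw [hRmeas t ht] at h0
    linarith
  -- lower bound on integrals over subballs
  have hsub : ∀ t : ℝ, 0 < t → ∀ (p : EuclideanSpace ℝ (Fin (n+1))) (ρ b : ℝ), 0 ≤ ρ →
      ball p ρ ⊆ ball (z t) (R t) → (∀ x ∈ ball p ρ, b ≤ g x) →
      b * (ρ^(n+1) * ω) ≤ ∫ x in ball p ρ, g x := by
    intro t ht p ρ b hρ hss hb
    have h1 : IntegrableOn g (ball p ρ) := (hInt t ht).mono_set hss
    have h2 := setIntegral_ge_of_const_le_real measurableSet_ball measure_ball_lt_top.ne hb h1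
    rwa [measureReal_def, hvol p ρ hρ] at h2
  -- upper bound d for integrals over subsets of the ball
  have hle_d : ∀ t : ℝ, 0 < t → ∀ s : Set (EuclideanSpace ℝ (Fin (n+1))),
      s ⊆ ball (z t) (R t) → (∫ x in s, g x) ≤ d := by
    intro t ht s hss
    rw [← hRmeas t ht]
    exact setIntegral_mono_set (hInt t ht)
      (Eventually.of_forall fun x => (hg0 x).le) hss.eventuallyLE
  -- constants for the cap argument
  set c₀ : ℝ := c₂ * ((3:ℝ)^(n+1))⁻¹ * ω with hc₀def
  have hc₀ : 0 < c₀ := by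
    rw [hc₀def]
    exact mul_pos (mul_pos hc₂ (by positivity)) hω
  clear_value c₀
  set K : ℕ := ⌈d / c₀⌉₊ + 1 with hKdef
  have hdK : d < K * c₀ := by
    have h1 : d / c₀ < (K:ℝ) := by
      rw [hKdef]; push_cast; exact lt_of_le_of_lt (Nat.le_ceil _) (by norm_num)
    calc d = (d / c₀) * c₀ := by field_simp
      _ < K * c₀ := mul_lt_mul_of_pos_right h1 hc₀
  clear_value K
  set q : ℝ := (4:ℝ)⁻¹ with hqdef
  have hq0 : (0:ℝ) < q := by norm_num
  have hq1 : q < 1 := by norm_num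
  have hq14 : q = 4⁻¹ := hqdef
  clear_value q
  have hqk : ∀ k : ℕ, 0 < q^k := fun k => pow_pos hq0 k
  have hqkK : ∀ k : ℕ, k ≤ K → q^K ≤ q^k := fun k hk => pow_le_pow_of_le_one hq0.le hq1.le hk
  set ε : ℝ := q^K / 2 with hεdef
  have hε : 0 < ε := by rw [hεdef]; exact div_pos (hqk K) two_pos
  have hεhalf : ε ≤ 1/2 := by
    rw [hεdef]
    have h : q^K ≤ 1 := pow_le_one₀ hq0.le hq1.le
    linarith
  clear_value ε
  -- STEP 1 : R t ≤ (1-ε) t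
  have step1 : ∀ t : ℝ, 0 < t → 1 ≤ t * q^K → R₁ ≤ t * q^K / 2 → R t ≤ (1 - ε) * t := by
    intro t ht h1 h2
    by_contra hcon
    push_neg at hcon
    obtain ⟨cC, hcC⟩ : ∃ F : ℕ → EuclideanSpace ℝ (Fin (n+1)),
        ∀ k, F k = EuclideanSpace.single (⟨0, by omega⟩ : Fin (n+1)) (t * q^k) :=
      ⟨_, fun k => rfl⟩
    obtain ⟨cρ, hcρ⟩ : ∃ F : ℕ → ℝ, ∀ k, F k = t * q^k / 2 := ⟨_, fun k => rfl⟩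
    have hsubball : ∀ k ∈ Finset.Icc 1 K, ball (cC k) (cρ k) ⊆ ball (z t) (R t) := by
      intro k hk
      apply ball_subset_ball'
      have hdist : dist (cC k) (z t) = t - t * q^k := by
        rw [hz t, hcC k, EuclideanSpace.dist_single_same, Real.dist_eq, abs_of_nonpos (by
          nlinarith [pow_le_one₀ hq0.le hq1.le (a := q) (n := k)])]
        ring
      rw [hdist, hcρ k]
      have hk2 : q^K ≤ q^k := hqkK k (Finset.mem_Icc.mp hk).2
      rw [hεdef] at hcon
      nlinarith
    have hnorm_lb : ∀ k, ∀ x ∈ ball (cC k) (cρ k), t * q^k / 2 ≤ ‖x‖ := by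
      intro k x hx
      have h3 : dist x (cC k) < cρ k := mem_ball.mp hx
      have h4 : ‖cC k‖ = t * q^k := by
        rw [hcC k, EuclideanSpace.norm_single, Real.norm_eq_abs,
          abs_of_pos (mul_pos ht (hqk k))]
      have h5 : ‖cC k‖ - ‖x‖ ≤ ‖cC k - x‖ := norm_sub_norm_le _ _
      rw [← dist_eq_norm, dist_comm] at h5
      rw [hcρ k] at h3
      rw [h4] at h5
      linarith
    have hnorm_ub : ∀ k, ∀ x ∈ ball (cC k) (cρ k), ‖x‖ ≤ (3/2) * (t * q^k) := by
      intro k x hx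
      have h3 : dist x (cC k) < cρ k := mem_ball.mp hx
      have h4 : ‖cC k‖ = t * q^k := by
        rw [hcC k, EuclideanSpace.norm_single, Real.norm_eq_abs,
          abs_of_pos (mul_pos ht (hqk k))]
      have h5 : ‖x‖ - ‖cC k‖ ≤ ‖x - cC k‖ := norm_sub_norm_le _ _
      rw [← dist_eq_norm] at h5
      rw [hcρ k] at h3
      rw [h4] at h5
      linarith
    have hgk : ∀ k ∈ Finset.Icc 1 K, ∀ x ∈ ball (cC k) (cρ k),
        c₂ * ((3/2) * (t * q^k)) ^ (-β) ≤ g x := by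
      intro k hk x hx
      have hlb := hnorm_lb k x hx
      have hub := hnorm_ub k x hx
      have hx0 : (0:ℝ) < ‖x‖ :=
        lt_of_lt_of_le (div_pos (mul_pos ht (hqk k)) two_pos) hlb
      have hRx : R₁ ≤ ‖x‖ := by
        have hk2 : q^K ≤ q^k := hqkK k (Finset.mem_Icc.mp hk).2
        nlinarith
      calc c₂ * ((3/2) * (t * q^k)) ^ (-β) ≤ c₂ * ‖x‖ ^ (-β) := by
            apply mul_le_mul_of_nonneg_left _ hc₂.le
            exact Real.rpow_le_rpow_of_nonpos hx0 hub (neg_nonpos.mpr hβ.le)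
        _ ≤ g x := hgb x hRx
    have hcap_lb : ∀ k ∈ Finset.Icc 1 K, c₀ ≤ ∫ x in ball (cC k) (cρ k), g x := by
      intro k hk
      have hA := hsub t ht (cC k) (cρ k) (c₂ * ((3/2) * (t * q^k)) ^ (-β))
        (by rw [hcρ k]; exact (div_pos (mul_pos ht (hqk k)) two_pos).le)
        (hsubball k hk) (hgk k hk)
      refine le_trans ?_ hA
      have hu : 1 ≤ t * q^k := by
        have hk2 : q^K ≤ q^k := hqkK k (Finset.mem_Icc.mp hk).2
        nlinarith
      have harith := isoAux_arith (n+1) β c₂ ω (t * q^k) (by rw [← hNrdef]; exact hβN) hc₂ hω hu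
      rw [hc₀def, hcρ k]
      convert harith using 3
    have hdisj : Set.Pairwise ↑(Finset.Icc 1 K)
        (Function.onFun Disjoint fun k => ball (cC k) (cρ k)) := by
      have hlt : ∀ k l : ℕ, k < l → Disjoint (ball (cC k) (cρ k)) (ball (cC l) (cρ l)) := by
        intro k l hkl
        apply ball_disjoint_ball
        have hdist : dist (cC k) (cC l) = t * q^k - t * q^l := by
          rw [hcC k, hcC l, EuclideanSpace.dist_single_same, Real.dist_eq, abs_of_nonneg (by
            nlinarith [pow_le_pow_of_le_one hq0.le hq1.le hkl.le])]
        rw [hdist, hcρ k, hcρ l]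
        have h6 : q^l ≤ q^(k+1) := pow_le_pow_of_le_one hq0.le hq1.le hkl
        have h8 : q^l ≤ q^k * 4⁻¹ := by
          rw [← hq14, ← pow_succ q k]; exact h6
        have h9 : (0:ℝ) ≤ q^k/2 - 3*q^l/2 := by linarith [(hqk k).le]
        nlinarith [mul_nonneg ht.le h9]
      intro k hk l hl hkl
      rcases lt_or_gt_of_ne hkl with h | h
      · exact hlt k l h
      · exact (hlt l k h).symm
    have hsum : (K:ℝ) * c₀ ≤ ∫ x in (⋃ k ∈ Finset.Icc 1 K, ball (cC k) (cρ k)), g x := by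
      rw [integral_biUnion_finset (Finset.Icc 1 K) (fun k _ => measurableSet_ball) hdisj
        (fun k hk => (hInt t ht).mono_set (hsubball k hk))]
      calc (K:ℝ) * c₀ = ∑ _k ∈ Finset.Icc 1 K, c₀ := by
            rw [Finset.sum_const, Nat.card_Icc]
            simp [nsmul_eq_mul]
        _ ≤ _ := Finset.sum_le_sum hcap_lb
    have hfinal : (K:ℝ) * c₀ ≤ d :=
      le_trans hsum (hle_d t ht _ (Set.iUnion₂_subset hsubball))
    linarith
  -- sphere measure constants
  set SS : ℝ≥0∞ := μH[Nr - 1] (Metric.sphere (0 : EuclideanSpace ℝ (Fin (n+1))) 1) with hSSdef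
  have hSSfin : SS < ⊤ := by
    rw [hSSdef, hNrn]
    exact isoAux_sphere_haus_fin n
  clear_value SS
  set S' : ℝ := SS.toReal with hS'def
  have hS'0 : 0 ≤ S' := by rw [hS'def]; exact ENNReal.toReal_nonneg
  clear_value S'
  set A : ℝ := d * (2:ℝ)^β / (c₂ * ω) with hAdef
  have hA : 0 < A := by
    rw [hAdef]
    have h1 : (0:ℝ) < (2:ℝ)^β := Real.rpow_pos_of_pos two_pos β
    exact div_pos (mul_pos hd h1) (mul_pos hc₂ hω)
  clear_value A
  set C₂ : ℝ := A ^ (Nr⁻¹) with hC₂def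
  have hC₂ : 0 < C₂ := by rw [hC₂def]; exact Real.rpow_pos_of_pos hA _
  clear_value C₂
  set C₃ : ℝ := c₁ * ε^(-α) * (C₂ ^ (Nr - 1)) * S' with hC₃def
  clear_value C₃
  -- STEP 2 : R t ≤ C₂ t^(β/Nr)
  have step2 : ∀ t : ℝ, 0 < t → R₁ ≤ ε * t → R t ≤ (1 - ε) * t →
      R t ≤ C₂ * t ^ (β / Nr) := by
    intro t ht hR₁t hRle
    have hRt := hRpos t ht
    have hgball : ∀ x ∈ ball (z t) (R t), c₂ * (2*t) ^ (-β) ≤ g x := by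
      intro x hx
      have h1 : dist x (z t) < R t := mem_ball.mp hx
      have h2 : ‖z t‖ = t := hznorm t ht
      have h5 : ‖z t‖ - ‖x‖ ≤ ‖z t - x‖ := norm_sub_norm_le _ _
      rw [← dist_eq_norm, dist_comm] at h5
      have h6 : ‖x‖ - ‖z t‖ ≤ ‖x - z t‖ := norm_sub_norm_le _ _
      rw [← dist_eq_norm] at h6
      have hxlb : ε * t ≤ ‖x‖ := by nlinarith
      have hxub : ‖x‖ ≤ 2 * t := by nlinarith
      have hx0 : (0:ℝ) < ‖x‖ := lt_of_lt_of_le (mul_pos hε ht) hxlb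
      calc c₂ * (2*t) ^ (-β) ≤ c₂ * ‖x‖ ^ (-β) := by
            apply mul_le_mul_of_nonneg_left _ hc₂.le
            exact Real.rpow_le_rpow_of_nonpos hx0 hxub (neg_nonpos.mpr hβ.le)
        _ ≤ g x := hgb x (le_trans hR₁t hxlb)
    have hball_lb := hsub t ht (z t) (R t) _ hRt.le (subset_refl _) hgball
    have hball_ub := hle_d t ht _ (subset_refl _)
    have hchain : c₂ * (2*t) ^ (-β) * ((R t)^(n+1) * ω) ≤ d := le_trans hball_lb hball_ub
    have h2t : ((2*t):ℝ) ^ (-β) = ((2:ℝ)^β * t^β)⁻¹ := by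
      rw [Real.rpow_neg (by linarith), Real.mul_rpow (by norm_num) ht.le]
    rw [h2t] at hchain
    have hPpos : (0:ℝ) < (2:ℝ)^β * t^β :=
      mul_pos (Real.rpow_pos_of_pos two_pos β) (Real.rpow_pos_of_pos ht β)
    have hRN : (R t)^(n+1) ≤ A * t^β := by
      rw [hAdef, div_mul_eq_mul_div, le_div_iff₀ (mul_pos hc₂ hω)]
      have h3 := mul_le_mul_of_nonneg_right hchain hPpos.le
      have h4 : c₂ * ((2:ℝ)^β * t^β)⁻¹ * ((R t)^(n+1) * ω) * ((2:ℝ)^β * t^β)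
          = (R t)^(n+1) * (c₂ * ω) := by
        field_simp
      rw [h4] at h3
      calc (R t)^(n+1) * (c₂ * ω) ≤ d * ((2:ℝ)^β * t^β) := h3
        _ = d * (2:ℝ)^β * t^β := by ring
    have hroot : R t = ((R t)^(n+1) : ℝ) ^ (Nr⁻¹) := by
      rw [← Real.rpow_natCast (R t) (n+1), ← Real.rpow_mul hRt.le, hNrdef]
      rw [mul_inv_cancel₀ (by positivity), Real.rpow_one]
    rw [hroot]
    calc ((R t)^(n+1) : ℝ) ^ (Nr⁻¹) ≤ (A * t^β) ^ (Nr⁻¹) := by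
          apply Real.rpow_le_rpow (pow_nonneg hRt.le _) hRN (inv_nonneg.mpr hNr0.le)
      _ = C₂ * t ^ (β / Nr) := by
          rw [Real.mul_rpow hA.le (Real.rpow_nonneg ht.le β), hC₂def, ← Real.rpow_mul ht.le]
          rw [div_eq_mul_inv]
  -- eventual sphere bound
  have key : ∀ᶠ t in atTop, ‖∫ x in Metric.sphere (z t) (R t), f x ∂μH[Nr - 1]‖
      ≤ C₃ * t ^ (β * (Nr - 1) / Nr - α) := by
    filter_upwards [eventually_gt_atTop 0, eventually_ge_atTop ((4:ℝ)^K),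
      eventually_ge_atTop (2*R₁*(4:ℝ)^K)] with t ht h4K hR₁K
    have hq4 : q^K = ((4:ℝ)^K)⁻¹ := by rw [hq14, inv_pow]
    have h4Kpos : (0:ℝ) < (4:ℝ)^K := by positivity
    have h1 : 1 ≤ t * q^K := by
      rw [hq4]
      calc (1:ℝ) = (4:ℝ)^K * ((4:ℝ)^K)⁻¹ := by field_simp
        _ ≤ t * ((4:ℝ)^K)⁻¹ := by
            apply mul_le_mul_of_nonneg_right h4K (by positivity)
    have h2 : R₁ ≤ t * q^K / 2 := by
      rw [hq4]
      have h3 : 2*R₁*(4:ℝ)^K * ((4:ℝ)^K)⁻¹ ≤ t * ((4:ℝ)^K)⁻¹ :=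
        mul_le_mul_of_nonneg_right hR₁K (by positivity)
      have he : 2*R₁*(4:ℝ)^K * ((4:ℝ)^K)⁻¹ = 2*R₁ := by field_simp
      rw [he] at h3
      linarith
    have hεt : R₁ ≤ ε * t := by
      rw [hεdef]
      calc R₁ ≤ t * q^K / 2 := h2
        _ = q^K/2 * t := by ring
    have hR1 := step1 t ht h1 h2
    have hR2 := step2 t ht hεt hR1
    have hRt := hRpos t ht
    have hμ : μH[Nr - 1] (Metric.sphere (z t) (R t))
        = ENNReal.ofReal ((R t) ^ (Nr - 1)) * SS := by
      rw [hSSdef]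
      exact isoAux_sphere_scale (n+1) (z t) (R t) hRt (Nr - 1) hNrd
    have hμfin : μH[Nr - 1] (Metric.sphere (z t) (R t)) < ⊤ := by
      rw [hμ]
      exact ENNReal.mul_lt_top ENNReal.ofReal_lt_top hSSfin
    have hfb' : ∀ x ∈ Metric.sphere (z t) (R t), ‖f x‖ ≤ c₁ * (ε*t) ^ (-α) := by
      intro x hx
      have hxd : dist x (z t) = R t := mem_sphere.mp hx
      have h5 : ‖z t‖ - ‖x‖ ≤ ‖z t - x‖ := norm_sub_norm_le _ _
      rw [← dist_eq_norm, dist_comm] at h5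
      rw [hznorm t ht] at h5
      have hxlb : ε * t ≤ ‖x‖ := by nlinarith
      have hx0 : (0:ℝ) < ε * t := mul_pos hε ht
      rw [Real.norm_eq_abs, abs_of_pos (hf0 x)]
      calc f x ≤ c₁ * ‖x‖ ^ (-α) := hfb x (le_trans hεt hxlb)
        _ ≤ c₁ * (ε*t) ^ (-α) := by
            apply mul_le_mul_of_nonneg_left _ hc₁.le
            exact Real.rpow_le_rpow_of_nonpos hx0 hxlb (neg_nonpos.mpr hα.le)
    have hbound := norm_setIntegral_le_of_norm_le_const (μ := μH[Nr - 1]) hμfin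
      hfb'
    rw [measureReal_def] at hbound
    have htoReal : (μH[Nr - 1] (Metric.sphere (z t) (R t))).toReal
        = (R t) ^ (Nr - 1) * S' := by
      rw [hμ, ENNReal.toReal_mul, ENNReal.toReal_ofReal (Real.rpow_nonneg hRt.le _), hS'def]
    refine le_trans hbound ?_
    rw [htoReal]
    have e1 : ((ε*t):ℝ) ^ (-α) = ε^(-α) * t^(-α) := Real.mul_rpow hε.le ht.le
    have e2 : (R t) ^ (Nr - 1) ≤ C₂^(Nr-1) * t^(β*(Nr-1)/Nr) := by
      calc (R t) ^ (Nr - 1) ≤ (C₂ * t^(β/Nr)) ^ (Nr - 1) :=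
            Real.rpow_le_rpow hRt.le hR2 hNrd
        _ = C₂^(Nr-1) * (t^(β/Nr))^(Nr-1) :=
            Real.mul_rpow hC₂.le (Real.rpow_nonneg ht.le _)
        _ = C₂^(Nr-1) * t^(β*(Nr-1)/Nr) := by
            rw [← Real.rpow_mul ht.le]
            congr 1
            field_simp
    have hrc : (0:ℝ) ≤ c₁ * (ε*t) ^ (-α) :=
      mul_nonneg hc₁.le (Real.rpow_nonneg (mul_pos hε ht).le _)
    calc c₁ * (ε*t)^(-α) * ((R t)^(Nr-1) * S')
        ≤ c₁ * (ε*t)^(-α) * ((C₂^(Nr-1) * t^(β*(Nr-1)/Nr)) * S') := by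
          apply mul_le_mul_of_nonneg_left _ hrc
          exact mul_le_mul_of_nonneg_right e2 hS'0
      _ = C₃ * t ^ (β*(Nr-1)/Nr - α) := by
          rw [e1, hC₃def]
          rw [show β*(Nr-1)/Nr - α = -α + β*(Nr-1)/Nr by ring, Real.rpow_add ht]
          ring
  -- tendsto of the bounding function
  have hexp : 0 < α - β * (Nr - 1) / Nr := by linarith
  have htend0 : Tendsto (fun t : ℝ => C₃ * t ^ (β * (Nr - 1) / Nr - α)) atTop (𝓝 0) := by
    have h1 : Tendsto (fun t : ℝ => t ^ (-(α - β * (Nr - 1) / Nr))) atTop (𝓝 0) :=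
      tendsto_rpow_neg_atTop hexp
    have h2 : Tendsto (fun t : ℝ => C₃ * t ^ (-(α - β * (Nr - 1) / Nr))) atTop (𝓝 (C₃ * 0)) :=
      h1.const_mul C₃
    rw [mul_zero] at h2
    convert h2 using 3
    ring_nf
  have part1 : Tendsto (fun t => ∫ x in Metric.sphere (z t) (R t), f x ∂μH[Nr - 1])
      atTop (𝓝 0) := squeeze_zero_norm' key htend0
  refine ⟨part1, ?_⟩
  rintro ⟨M, hMd, hMpos, hMmin⟩
  have hev : ∀ᶠ t in atTop, (∫ x in Metric.sphere (z t) (R t), f x ∂μH[Nr - 1])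
      < (∫ x in frontier M, f x ∂μH[Nr - 1]) := part1.eventually_lt_const hMpos
  obtain ⟨t, ht0, hlt⟩ := ((eventually_gt_atTop (0:ℝ)).and hev).exists
  have hfront : frontier (ball (z t) (R t)) = Metric.sphere (z t) (R t) :=
    frontier_ball (z t) (hRpos t ht0).ne'
  have hmin := hMmin (ball (z t) (R t)) (hRmeas t ht0)
  rw [hfront] at hmin
  exact absurd hmin (not_le.mpr hlt)
end
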